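/- Let E be a real inner product space of finite dimension n ≥ 3 with orthonormal basis (e₁,…,eₙ), let h and r be symmetric bilinear forms on E, and let λ ∈ ℝ. If (1/2)h + (1/(n−2))r = ((n−1)λ/(n−2))·g and Σᵢ h(eᵢ,eᵢ) = 0, then |r|² = n(n−1)²λ² + ((n−2)²/4)·|h|². -/

import Mathlib

open RealInnerProductSpace

/-- The inner product of a real inner product space, viewed as a symmetric
bilinear form `g(X,Y) = ⟪X,Y⟫`. -/
noncomputable def gip {E : Type*} [NormedAddCommGroup E] [InnerProductSpace ℝ E] :
    E → E → ℝ := fun x y => ⟪x, y⟫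

/-- The Kulkarni–Nomizu product of two bilinear forms. -/
def kn {E : Type*} (T₁ T₂ : E → E → ℝ) : E → E → E → E → ℝ :=
  fun X Y Z W =>
    T₁ X W * T₂ Y Z + T₁ Y Z * T₂ X W - T₁ X Z * T₂ Y W - T₁ Y W * T₂ X Z

theorem stmt_5 {E : Type*} [NormedAddCommGroup E] [InnerProductSpace ℝ E]
    {n : ℕ} (hn : 3 ≤ n) (e : OrthonormalBasis (Fin n) ℝ E)
    (h : E →ₗ[ℝ] E →ₗ[ℝ] ℝ) (hsymm : ∀ X Y : E, h X Y = h Y X)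
    (r : E →ₗ[ℝ] E →ₗ[ℝ] ℝ) (rsymm : ∀ X Y : E, r X Y = r Y X) (lam : ℝ)
    (hsol : ∀ Y Z : E, (1 / 2) * h Y Z + (1 / ((n : ℝ) - 2)) * r Y Z
      = (((n : ℝ) - 1) * lam / ((n : ℝ) - 2)) * ⟪Y, Z⟫)
    (htr : ∑ i, h (e i) (e i) = 0) :
    ∑ i, ∑ j, (r (e i) (e j)) ^ 2
      = (n : ℝ) * ((n : ℝ) - 1) ^ 2 * lam ^ 2
        + (((n : ℝ) - 2) ^ 2 / 4) * ∑ i, ∑ j, (h (e i) (e j)) ^ 2 := by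
  have hn3 : (3 : ℝ) ≤ (n : ℝ) := by exact_mod_cast hn
  have hne : ((n : ℝ) - 2) ≠ 0 := by linarith
  have hr : ∀ Y Z : E, r Y Z
      = ((n : ℝ) - 1) * lam * ⟪Y, Z⟫ - (((n : ℝ) - 2) / 2) * h Y Z := by
    intro Y Z
    have h0 := hsol Y Z
    field_simp at h0
    have h1 : (h Y) Z * ((n : ℝ) - 2) + (r Y) Z * 2
        = ((n : ℝ) - 1) * lam * ⟪Y, Z⟫ * 2 := by
      apply mul_right_cancel₀ hne
      linear_combination ((n : ℝ) - 2) * h0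
    linarith
  have hij : ∀ i j : Fin n, (⟪e i, e j⟫ : ℝ) = if i = j then 1 else 0 :=
    fun i j => orthonormal_iff_ite.mp e.orthonormal i j
  have key : ∀ i j : Fin n, (r (e i) (e j)) ^ 2
      = (((n : ℝ) - 1) ^ 2 * lam ^ 2) * (if i = j then (1 : ℝ) else 0)
        - (((n : ℝ) - 1) * lam * ((n : ℝ) - 2)) *
            ((if i = j then (1 : ℝ) else 0) * h (e i) (e j))
        + (((n : ℝ) - 2) ^ 2 / 4) * (h (e i) (e j)) ^ 2 := by
    intro i j
    rw [hr, hij]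
    split <;> ring
  simp_rw [key]
  simp only [ite_mul, one_mul, zero_mul, Finset.sum_add_distrib, Finset.sum_sub_distrib,
    ← Finset.mul_sum, Finset.sum_ite_eq, Finset.mem_univ, if_true, mul_one, htr, mul_zero,
    Finset.sum_const, Finset.card_univ, Fintype.card_fin, nsmul_eq_mul, sub_zero]
  ring
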